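/- Let m ≥ 1 and i ≥ 1 be integers and let N > 1 be a real number. Then for all real numbers q' > 1 and d' > 0 satisfying (q')^{d'} = N, one has m·d' + i · 2^{(i−1)/2} · ((2m)^{i−1} · 2·log₂ q')^{1/i} ≥ (i+1) · 2^{i/2} · (m^i · log₂ N)^{1/(i+1)}; moreover there exist real q' > 1 and d' > 0 with (q')^{d'} = N attaining equality, namely those for which m·d' = 2^{(i−1)/2} · ((2m)^{i−1} · 2·log₂ q')^{1/i} = 2^{i/2} · (m^i · log₂ N)^{1/(i+1)}. -/

import Mathlib

lemma amgm2 (a b w : ℝ) (ha : 0 < a) (hb : 0 < b) (hw : 0 < w) :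
    (w + 1) * (a * b ^ w) ^ (1 / (w + 1)) ≤ a + w * b := by
  have hw1 : (0:ℝ) < w + 1 := by linarith
  have h := Real.geom_mean_le_arith_mean2_weighted
    (w₁ := 1/(w+1)) (w₂ := w/(w+1)) (p₁ := a) (p₂ := b)
    (by positivity) (by positivity) ha.le hb.le (by field_simp; ring)
  have key : (a * b ^ w) ^ (1 / (w + 1)) = a ^ (1/(w+1)) * b ^ (w/(w+1)) := by
    rw [Real.mul_rpow ha.le (by positivity), ← Real.rpow_mul hb.le]
    ring_nf
  rw [key]
  calc (w+1) * (a ^ (1/(w+1)) * b ^ (w/(w+1)))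
      ≤ (w+1) * ((1/(w+1)) * a + (w/(w+1)) * b) := by
        exact mul_le_mul_of_nonneg_left h hw1.le
    _ = a + w * b := by field_simp

lemma keyprod (m i : ℕ) (hm : 1 ≤ m) (hi : 1 ≤ i) (x y : ℝ) (hy : 0 < y) :
    ((m:ℝ)*x) * ((2:ℝ)^(((i:ℝ)-1)/2) * (((2*(m:ℝ))^(i-1)) * (2 * y))^(1/(i:ℝ)))^(i:ℝ)
      = (2:ℝ)^((i:ℝ)*((i:ℝ)+1)/2) * (((m:ℝ)^(i:ℕ)) * (x*y)) := by
  have hm0 : (0:ℝ) < m := by exact_mod_cast hm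
  have hi0 : (0:ℝ) < i := by exact_mod_cast hi
  have hC : (0:ℝ) ≤ ((2*(m:ℝ))^(i-1)) * (2 * y) := by positivity
  rw [Real.mul_rpow (by positivity) (by positivity), ← Real.rpow_mul hC,
    one_div_mul_cancel hi0.ne', Real.rpow_one, ← Real.rpow_mul (by norm_num : (0:ℝ) ≤ 2)]
  have hcast : ((i - 1 : ℕ) : ℝ) = (i:ℝ) - 1 := by
    push_cast [Nat.cast_sub hi]; ring
  have h2m : ((2*(m:ℝ))^(i-1)) = (2:ℝ) ^ ((i:ℝ) - 1) * (m:ℝ) ^ ((i:ℝ) - 1) := by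
    rw [mul_pow, ← Real.rpow_natCast 2 (i-1), ← Real.rpow_natCast (m:ℝ) (i-1), hcast]
  have hmi : ((m:ℝ) ^ (i:ℕ)) = (m:ℝ) ^ ((i:ℝ)) := (Real.rpow_natCast _ _).symm
  rw [h2m, hmi]
  have e1 : (2:ℝ) ^ (((i:ℝ)-1)/2 * (i:ℝ)) * ((2:ℝ) ^ ((i:ℝ) - 1) * (2:ℝ))
      = (2:ℝ) ^ ((i:ℝ)*((i:ℝ)+1)/2) := by
    nth_rewrite 4 [show (2:ℝ) = (2:ℝ)^(1:ℝ) by norm_num]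
    rw [← Real.rpow_add two_pos, ← Real.rpow_add two_pos]
    congr 1
    ring
  have e2 : (m:ℝ) * (m:ℝ) ^ ((i:ℝ) - 1) = (m:ℝ) ^ ((i:ℝ)) := by
    nth_rewrite 1 [show (m:ℝ) = (m:ℝ)^(1:ℝ) by rw [Real.rpow_one]]
    rw [← Real.rpow_add hm0]
    congr 1
    ring
  calc (m:ℝ)*x * ((2:ℝ) ^ (((i:ℝ)-1)/2 * (i:ℝ)) * (((2:ℝ)^((i:ℝ)-1) * (m:ℝ)^((i:ℝ)-1)) * (2 * y)))
      = ((2:ℝ) ^ (((i:ℝ)-1)/2 * (i:ℝ)) * ((2:ℝ) ^ ((i:ℝ) - 1) * 2)) * (((m:ℝ) * (m:ℝ)^((i:ℝ)-1)) * (x*y)) := by ring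
    _ = (2:ℝ)^((i:ℝ)*((i:ℝ)+1)/2) * (((m:ℝ)^(i:ℝ)) * (x*y)) := by rw [e1, e2]

lemma rhs_eq (i : ℕ) (hi : 1 ≤ i) (T : ℝ) (hT : 0 ≤ T) :
    ((2:ℝ)^((i:ℝ)*((i:ℝ)+1)/2) * T) ^ (1/((i:ℝ)+1)) = (2:ℝ)^((i:ℝ)/2) * T^(1/((i:ℝ)+1)) := by
  have hi0 : (0:ℝ) < i := by exact_mod_cast hi
  have h1 : (0:ℝ) < (i:ℝ) + 1 := by linarith
  rw [Real.mul_rpow (by positivity) hT, ← Real.rpow_mul (by norm_num : (0:ℝ) ≤ 2),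
    show (i:ℝ)*((i:ℝ)+1)/2 * (1/((i:ℝ)+1)) = (i:ℝ)/2 by field_simp]

/-- for all reals `q' > 1`, `d' > 0` with `q'^d' = N`,
`m·d' + i·2^((i-1)/2)·((2m)^(i-1)·2·log₂ q')^(1/i) ≥ (i+1)·2^(i/2)·(m^i·log₂ N)^(1/(i+1))`,
and there exist `q' > 1`, `d' > 0` with `q'^d' = N` attaining equality, namely with
`m·d' = 2^((i-1)/2)·((2m)^(i-1)·2·log₂ q')^(1/i) = 2^(i/2)·(m^i·log₂ N)^(1/(i+1))`. -/
theorem stmt6 (m i : ℕ) (hm : 1 ≤ m) (hi : 1 ≤ i) (N : ℝ) (hN : 1 < N) :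
    (∀ q' d' : ℝ, 1 < q' → 0 < d' → q' ^ d' = N →
      ((i : ℝ) + 1) * (2 : ℝ) ^ ((i : ℝ) / 2) *
          (((m : ℝ) ^ (i : ℕ)) * Real.logb 2 N) ^ (1 / ((i : ℝ) + 1)) ≤
        (m : ℝ) * d' + (i : ℝ) * (2 : ℝ) ^ (((i : ℝ) - 1) / 2) *
          (((2 * (m : ℝ)) ^ (i - 1)) * (2 * Real.logb 2 q')) ^ (1 / (i : ℝ))) ∧
    (∃ q' d' : ℝ, 1 < q' ∧ 0 < d' ∧ q' ^ d' = N ∧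
      (m : ℝ) * d' =
        (2 : ℝ) ^ (((i : ℝ) - 1) / 2) *
          (((2 * (m : ℝ)) ^ (i - 1)) * (2 * Real.logb 2 q')) ^ (1 / (i : ℝ)) ∧
      (m : ℝ) * d' =
        (2 : ℝ) ^ ((i : ℝ) / 2) *
          (((m : ℝ) ^ (i : ℕ)) * Real.logb 2 N) ^ (1 / ((i : ℝ) + 1)) ∧
      (m : ℝ) * d' + (i : ℝ) * (2 : ℝ) ^ (((i : ℝ) - 1) / 2) *
          (((2 * (m : ℝ)) ^ (i - 1)) * (2 * Real.logb 2 q')) ^ (1 / (i : ℝ)) =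
        ((i : ℝ) + 1) * (2 : ℝ) ^ ((i : ℝ) / 2) *
          (((m : ℝ) ^ (i : ℕ)) * Real.logb 2 N) ^ (1 / ((i : ℝ) + 1))) := by
  have hm0 : (0:ℝ) < m := by exact_mod_cast hm
  have hi0 : (0:ℝ) < i := by exact_mod_cast hi
  have hN0 : (0:ℝ) < N := lt_trans one_pos hN
  set L : ℝ := Real.logb 2 N with hLdef
  have hL : 0 < L := Real.logb_pos one_lt_two hN
  have hT : (0:ℝ) ≤ (m:ℝ)^(i:ℕ) * L := by positivity
  constructor
  · intro q' d' hq hd hqd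
    have hq0 : (0:ℝ) < q' := lt_trans one_pos hq
    have hy : 0 < Real.logb 2 q' := Real.logb_pos one_lt_two hq
    have hdl : d' * Real.logb 2 q' = L := by
      rw [hLdef, ← hqd, Real.logb_rpow_eq_mul_logb_of_pos hq0]
    set b : ℝ := (2:ℝ)^(((i:ℝ)-1)/2) * (((2*(m:ℝ))^(i-1)) * (2 * Real.logb 2 q'))^(1/(i:ℝ)) with hbdef
    have hb : 0 < b := by positivity
    have hprod : ((m:ℝ)*d') * b ^ (i:ℝ) = (2:ℝ)^((i:ℝ)*((i:ℝ)+1)/2) * ((m:ℝ)^(i:ℕ) * L) := by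
      rw [hbdef, keyprod m i hm hi d' _ hy, hdl]
    have hamgm := amgm2 ((m:ℝ)*d') b (i:ℝ) (by positivity) hb hi0
    rw [hprod, rhs_eq i hi _ hT] at hamgm
    calc ((i:ℝ) + 1) * (2:ℝ)^((i:ℝ)/2) * ((m:ℝ)^(i:ℕ) * L) ^ (1/((i:ℝ)+1))
        = ((i:ℝ) + 1) * ((2:ℝ)^((i:ℝ)/2) * ((m:ℝ)^(i:ℕ) * L) ^ (1/((i:ℝ)+1))) := by ring
      _ ≤ (m:ℝ)*d' + (i:ℝ) * b := by linarith [hamgm]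
      _ = (m:ℝ)*d' + (i:ℝ) * (2:ℝ)^(((i:ℝ)-1)/2) *
            (((2*(m:ℝ))^(i-1)) * (2 * Real.logb 2 q'))^(1/(i:ℝ)) := by rw [hbdef]; ring
  · set a : ℝ := (2:ℝ)^((i:ℝ)/2) * ((m:ℝ)^(i:ℕ) * L)^(1/((i:ℝ)+1)) with hadef
    have ha : 0 < a := by positivity
    have hd : 0 < a / (m:ℝ) := by positivity
    have hmd : (m:ℝ) * (a / (m:ℝ)) = a := by field_simp
    have hy : 0 < L / (a / (m:ℝ)) := by positivity
    have hq : 1 < (2:ℝ)^(L / (a / (m:ℝ))) := by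
      rw [Real.one_lt_rpow_iff_of_pos two_pos]
      exact Or.inl ⟨one_lt_two, hy⟩
    have hqd : ((2:ℝ)^(L / (a / (m:ℝ)))) ^ (a / (m:ℝ)) = N := by
      rw [← Real.rpow_mul (by norm_num : (0:ℝ) ≤ 2), div_mul_cancel₀ L hd.ne',
        hLdef, Real.rpow_logb two_pos (by norm_num) hN0]
    have hlogq : Real.logb 2 ((2:ℝ)^(L / (a / (m:ℝ)))) = L / (a / (m:ℝ)) :=
      Real.logb_rpow two_pos (by norm_num)
    have hi1 : ((i:ℝ)+1) ≠ 0 := by positivity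
    have hae : a ^ ((i:ℝ)+1) = (2:ℝ)^((i:ℝ)*((i:ℝ)+1)/2) * ((m:ℝ)^(i:ℕ) * L) := by
      rw [hadef, Real.mul_rpow (by positivity) (by positivity),
        ← Real.rpow_mul (by norm_num : (0:ℝ) ≤ 2), ← Real.rpow_mul hT,
        one_div_mul_cancel hi1, Real.rpow_one,
        show (i:ℝ)/2 * ((i:ℝ)+1) = (i:ℝ)*((i:ℝ)+1)/2 by ring]
    set B : ℝ := (2:ℝ)^(((i:ℝ)-1)/2) *
      (((2*(m:ℝ))^(i-1)) * (2 * (L / (a / (m:ℝ)))))^(1/(i:ℝ)) with hBdef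
    have hB : 0 < B := by positivity
    have hprod : a * B ^ (i:ℝ) = (2:ℝ)^((i:ℝ)*((i:ℝ)+1)/2) * ((m:ℝ)^(i:ℕ) * L) := by
      have h := keyprod m i hm hi (a / (m:ℝ)) (L / (a / (m:ℝ))) hy
      have hcanc : (a/(m:ℝ)) * (L / (a/(m:ℝ))) = L := by field_simp
      rw [hmd, hcanc, ← hBdef] at h
      exact h
    have hBe : B ^ (i:ℝ) = a ^ (i:ℝ) := by
      apply mul_left_cancel₀ ha.ne'
      rw [hprod, ← hae, Real.rpow_add ha, Real.rpow_one]
      ring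
    have hBa : B = a := by
      have h : (B ^ (i:ℝ)) ^ (1/(i:ℝ)) = (a ^ (i:ℝ)) ^ (1/(i:ℝ)) := by rw [hBe]
      rwa [← Real.rpow_mul hB.le, ← Real.rpow_mul ha.le,
        mul_one_div_cancel hi0.ne', Real.rpow_one, Real.rpow_one] at h
    have heq1 : (m:ℝ) * (a / (m:ℝ)) =
        (2:ℝ)^(((i:ℝ)-1)/2) * (((2*(m:ℝ))^(i-1)) *
          (2 * Real.logb 2 ((2:ℝ)^(L / (a / (m:ℝ)))))) ^ (1/(i:ℝ)) := by
      rw [hlogq, hmd, ← hBdef]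
      exact hBa.symm
    have heq2 : (m:ℝ) * (a / (m:ℝ)) =
        (2:ℝ)^((i:ℝ)/2) * ((m:ℝ)^(i:ℕ) * L) ^ (1/((i:ℝ)+1)) := by
      rw [hmd, hadef]
    refine ⟨(2:ℝ)^(L / (a / (m:ℝ))), a / (m:ℝ), hq, hd, hqd, heq1, heq2, ?_⟩
    rw [mul_assoc ((i:ℝ)), ← heq1, heq2]
    ring
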